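/- Let A₁ ∈ ℝⁿˣⁿ, B₁ ∈ ℝⁿ, K ∈ ℝ¹ˣⁿ, and P, Q symmetric positive definite with (A₁+B₁K)ᵀP + P(A₁+B₁K) = -Q. Define A(T) = I + A₁T and B(T) = B₁T + B₂T², and V(z)=zᵀPz. Then there exist M > 0 and T₀ > 0 such that for all T ∈ [0,T₀] and all z: V((A(T)+B(T)K)z) - V(z) ≤ -λ_min(Q)·T·‖z‖² + M·T²·‖z‖². -/

import Mathlib

open Matrix

section aux
variable {n : ℕ}

lemma dotProduct_self_nonneg' (z : Fin n → ℝ) : 0 ≤ z ⬝ᵥ z :=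
  Finset.sum_nonneg fun i _ => mul_self_nonneg _

lemma cs_dot (z w : Fin n → ℝ) : z ⬝ᵥ w ≤ Real.sqrt (z ⬝ᵥ z) * Real.sqrt (w ⬝ᵥ w) := by
  have h : (z ⬝ᵥ w) ^ 2 ≤ (z ⬝ᵥ z) * (w ⬝ᵥ w) := by
    have := Finset.sum_mul_sq_le_sq_mul_sq Finset.univ z w
    simpa [dotProduct, pow_two] using this
  calc z ⬝ᵥ w ≤ |z ⬝ᵥ w| := le_abs_self _
    _ = Real.sqrt ((z ⬝ᵥ w) ^ 2) := (Real.sqrt_sq_eq_abs _).symm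
    _ ≤ Real.sqrt ((z ⬝ᵥ z) * (w ⬝ᵥ w)) := Real.sqrt_le_sqrt h
    _ = _ := Real.sqrt_mul (dotProduct_self_nonneg' z) _

lemma mulVec_self_dot_le (A : Matrix (Fin n) (Fin n) ℝ) (z : Fin n → ℝ) :
    (A *ᵥ z) ⬝ᵥ (A *ᵥ z) ≤ (∑ i, ∑ j, (A i j) ^ 2) * (z ⬝ᵥ z) := by
  have : ∀ i, (A *ᵥ z) i * (A *ᵥ z) i ≤ (∑ j, (A i j) ^ 2) * (z ⬝ᵥ z) := by
    intro i
    have := Finset.sum_mul_sq_le_sq_mul_sq Finset.univ (A i) z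
    simpa [mulVec, dotProduct, pow_two] using this
  calc (A *ᵥ z) ⬝ᵥ (A *ᵥ z) = ∑ i, (A *ᵥ z) i * (A *ᵥ z) i := rfl
    _ ≤ ∑ i, (∑ j, (A i j) ^ 2) * (z ⬝ᵥ z) := Finset.sum_le_sum fun i _ => this i
    _ = _ := by rw [← Finset.sum_mul]

lemma quad_bound (A : Matrix (Fin n) (Fin n) ℝ) :
    ∃ c > (0 : ℝ), ∀ z : Fin n → ℝ, z ⬝ᵥ (A *ᵥ z) ≤ c * (z ⬝ᵥ z) := by
  set s := ∑ i, ∑ j, (A i j) ^ 2 with hs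
  have hs0 : 0 ≤ s := Finset.sum_nonneg fun i _ => Finset.sum_nonneg fun j _ => sq_nonneg _
  refine ⟨Real.sqrt s + 1, by positivity, fun z => ?_⟩
  have hzz := dotProduct_self_nonneg' z
  calc z ⬝ᵥ (A *ᵥ z) ≤ Real.sqrt (z ⬝ᵥ z) * Real.sqrt ((A *ᵥ z) ⬝ᵥ (A *ᵥ z)) := cs_dot _ _
    _ ≤ Real.sqrt (z ⬝ᵥ z) * Real.sqrt (s * (z ⬝ᵥ z)) := by
        exact mul_le_mul_of_nonneg_left (Real.sqrt_le_sqrt (mulVec_self_dot_le A z))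
          (Real.sqrt_nonneg _)
    _ = Real.sqrt s * (Real.sqrt (z ⬝ᵥ z) * Real.sqrt (z ⬝ᵥ z)) := by
        rw [Real.sqrt_mul hs0]; ring
    _ = Real.sqrt s * (z ⬝ᵥ z) := by rw [Real.mul_self_sqrt hzz]
    _ ≤ (Real.sqrt s + 1) * (z ⬝ᵥ z) := by nlinarith [Real.sqrt_nonneg s]

lemma mulVec_dot_eq (E : Matrix (Fin n) (Fin n) ℝ) (z w : Fin n → ℝ) :
    (E *ᵥ z) ⬝ᵥ w = z ⬝ᵥ (Eᵀ *ᵥ w) := by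
  rw [dotProduct_mulVec, vecMul_transpose]

lemma pair_bound (P E F : Matrix (Fin n) (Fin n) ℝ) :
    ∃ c > (0 : ℝ), ∀ z : Fin n → ℝ, (E *ᵥ z) ⬝ᵥ (P *ᵥ (F *ᵥ z)) ≤ c * (z ⬝ᵥ z) := by
  obtain ⟨c, hc, h⟩ := quad_bound (Eᵀ * P * F)
  refine ⟨c, hc, fun z => ?_⟩
  have : (E *ᵥ z) ⬝ᵥ (P *ᵥ (F *ᵥ z)) = z ⬝ᵥ ((Eᵀ * P * F) *ᵥ z) := by
    rw [mulVec_dot_eq, mulVec_mulVec, mulVec_mulVec]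
  rw [this]; exact h z

lemma rayleigh_lower {Q : Matrix (Fin n) (Fin n) ℝ} (hQ : Q.PosDef) (z : Fin n → ℝ) :
    (⨅ i, hQ.1.eigenvalues i) * (z ⬝ᵥ z) ≤ z ⬝ᵥ (Q *ᵥ z) := by
  rcases Nat.eq_zero_or_pos n with hn | hn
  · subst hn; simp [dotProduct]
  have : Nonempty (Fin n) := ⟨⟨0, hn⟩⟩
  set U : Matrix (Fin n) (Fin n) ℝ := (hQ.1.eigenvectorUnitary : Matrix (Fin n) (Fin n) ℝ) with hU
  have hUU : U * star U = 1 := (Matrix.mem_unitaryGroup_iff).mp hQ.1.eigenvectorUnitary.2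
  set w : Fin n → ℝ := star U *ᵥ z with hw
  have hsU : (star U : Matrix (Fin n) (Fin n) ℝ) = Uᵀ := by
    rw [Matrix.star_eq_conjTranspose, Matrix.conjTranspose_eq_transpose_of_trivial]
  have hzw : z ⬝ᵥ (Q *ᵥ z)
      = w ⬝ᵥ (diagonal (RCLike.ofReal ∘ hQ.1.eigenvalues) *ᵥ w) := by
    have h1 : z ᵥ* U = w := by rw [← mulVec_transpose, ← hsU, hw]
    conv_lhs => rw [hQ.1.spectral_theorem, Unitary.conjStarAlgAut_apply]
    rw [← mulVec_mulVec, ← mulVec_mulVec, ← hw, dotProduct_mulVec, h1]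
  have hww : w ⬝ᵥ w = z ⬝ᵥ z := by
    rw [hw, mulVec_dot_eq, mulVec_mulVec, hsU, Matrix.transpose_transpose, ← hsU, hUU,
      one_mulVec]
  have hmin : ∀ i, (⨅ i, hQ.1.eigenvalues i) ≤ hQ.1.eigenvalues i := fun i =>
    ciInf_le (Finite.bddBelow_range _) i
  rw [hzw]
  have : ∀ i, (⨅ i, hQ.1.eigenvalues i) * (w i * w i)
      ≤ w i * ((diagonal (RCLike.ofReal ∘ hQ.1.eigenvalues) *ᵥ w) i) := by
    intro i
    rw [mulVec_diagonal]
    have : (RCLike.ofReal ∘ hQ.1.eigenvalues) i = hQ.1.eigenvalues i := by simp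
    rw [this]
    nlinarith [hmin i, mul_self_nonneg (w i)]
  calc (⨅ i, hQ.1.eigenvalues i) * (z ⬝ᵥ z) = ∑ i, (⨅ i, hQ.1.eigenvalues i) * (w i * w i) := by
        rw [← hww]; simp only [dotProduct, Finset.mul_sum]
    _ ≤ ∑ i, w i * ((diagonal (RCLike.ofReal ∘ hQ.1.eigenvalues) *ᵥ w) i) :=
        Finset.sum_le_sum fun i _ => this i
    _ = _ := rfl

end aux
theorem stmt9 {n : ℕ}
    (A₁ : Matrix (Fin n) (Fin n) ℝ) (B₁ B₂ : Matrix (Fin n) (Fin 1) ℝ)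
    (K : Matrix (Fin 1) (Fin n) ℝ) (P Q : Matrix (Fin n) (Fin n) ℝ)
    (hP : P.PosDef) (hQ : Q.PosDef)
    (hLyap : (A₁ + B₁ * K)ᵀ * P + P * (A₁ + B₁ * K) = -Q) :
    ∃ M > (0 : ℝ), ∃ T₀ > (0 : ℝ), ∀ T ∈ Set.Icc (0 : ℝ) T₀, ∀ z : Fin n → ℝ,
      (((1 + T • A₁) + (T • B₁ + T ^ 2 • B₂) * K).mulVec z) ⬝ᵥ
          P.mulVec (((1 + T • A₁) + (T • B₁ + T ^ 2 • B₂) * K).mulVec z)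
        - z ⬝ᵥ P.mulVec z
      ≤ -(⨅ i, hQ.1.eigenvalues i) * T * (z ⬝ᵥ z) + M * T ^ 2 * (z ⬝ᵥ z) := by
  set C : Matrix (Fin n) (Fin n) ℝ := A₁ + B₁ * K with hC
  set D : Matrix (Fin n) (Fin n) ℝ := B₂ * K with hD
  obtain ⟨c1, hc1, b1⟩ := pair_bound P C C
  obtain ⟨c2, hc2, b2⟩ := pair_bound P 1 D
  obtain ⟨c3, hc3, b3⟩ := pair_bound P D 1
  obtain ⟨c4, hc4, b4⟩ := pair_bound P C D
  obtain ⟨c5, hc5, b5⟩ := pair_bound P D C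
  obtain ⟨c6, hc6, b6⟩ := pair_bound P D D
  refine ⟨c1 + c2 + c3 + c4 + c5 + c6, by linarith, 1, one_pos, fun T hT z => ?_⟩
  obtain ⟨hT0, hT1⟩ := hT
  set u : Fin n → ℝ := C *ᵥ z with hu
  set v : Fin n → ℝ := D *ᵥ z with hv
  have hmat : (1 + T • A₁) + (T • B₁ + T ^ 2 • B₂) * K
      = 1 + T • C + T ^ 2 • D := by
    rw [hC, hD, Matrix.add_mul, Matrix.smul_mul, Matrix.smul_mul, smul_add]
    abel
  have hmv : ((1 + T • A₁) + (T • B₁ + T ^ 2 • B₂) * K) *ᵥ z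
      = z + T • u + T ^ 2 • v := by
    rw [hmat, add_mulVec, add_mulVec, one_mulVec, smul_mulVec, smul_mulVec]
  have hexp : (z + T • u + T ^ 2 • v) ⬝ᵥ P *ᵥ (z + T • u + T ^ 2 • v)
      = z ⬝ᵥ P *ᵥ z + T * (z ⬝ᵥ (P *ᵥ u) + u ⬝ᵥ (P *ᵥ z))
        + T ^ 2 * (u ⬝ᵥ (P *ᵥ u) + z ⬝ᵥ (P *ᵥ v) + v ⬝ᵥ (P *ᵥ z))
        + T ^ 3 * (u ⬝ᵥ (P *ᵥ v) + v ⬝ᵥ (P *ᵥ u))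
        + T ^ 4 * (v ⬝ᵥ (P *ᵥ v)) := by
    simp only [mulVec_add, mulVec_smul, dotProduct_add, add_dotProduct, dotProduct_smul,
      smul_dotProduct, smul_eq_mul]
    ring
  have hlin : z ⬝ᵥ (P *ᵥ u) + u ⬝ᵥ (P *ᵥ z) = -(z ⬝ᵥ (Q *ᵥ z)) := by
    rw [hu, mulVec_dot_eq, mulVec_mulVec, mulVec_mulVec, ← dotProduct_add, ← add_mulVec]
    rw [show P * C + Cᵀ * P = -Q by rw [← hLyap]; exact add_comm _ _, neg_mulVec, dotProduct_neg]
  have hray := rayleigh_lower hQ z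
  have hzz := dotProduct_self_nonneg' z
  have e1 : u ⬝ᵥ (P *ᵥ u) ≤ c1 * (z ⬝ᵥ z) := b1 z
  have e2 : z ⬝ᵥ (P *ᵥ v) ≤ c2 * (z ⬝ᵥ z) := by have := b2 z; rwa [one_mulVec] at this
  have e3 : v ⬝ᵥ (P *ᵥ z) ≤ c3 * (z ⬝ᵥ z) := by have := b3 z; rwa [one_mulVec] at this
  have e4 : u ⬝ᵥ (P *ᵥ v) ≤ c4 * (z ⬝ᵥ z) := b4 z
  have e5 : v ⬝ᵥ (P *ᵥ u) ≤ c5 * (z ⬝ᵥ z) := b5 z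
  have e6 : v ⬝ᵥ (P *ᵥ v) ≤ c6 * (z ⬝ᵥ z) := b6 z
  have hT2 : (0:ℝ) ≤ T ^ 2 := sq_nonneg T
  have hT3 : (0:ℝ) ≤ T ^ 3 := pow_nonneg hT0 3
  have hT4 : (0:ℝ) ≤ T ^ 4 := pow_nonneg hT0 4
  have h32 : T ^ 3 ≤ T ^ 2 := pow_le_pow_of_le_one hT0 hT1 (by norm_num)
  have h42 : T ^ 4 ≤ T ^ 2 := pow_le_pow_of_le_one hT0 hT1 (by norm_num)
  have f1 : T ^ 2 * (u ⬝ᵥ (P *ᵥ u)) ≤ T ^ 2 * (c1 * (z ⬝ᵥ z)) :=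
    mul_le_mul_of_nonneg_left e1 hT2
  have f2 : T ^ 2 * (z ⬝ᵥ (P *ᵥ v)) ≤ T ^ 2 * (c2 * (z ⬝ᵥ z)) :=
    mul_le_mul_of_nonneg_left e2 hT2
  have f3 : T ^ 2 * (v ⬝ᵥ (P *ᵥ z)) ≤ T ^ 2 * (c3 * (z ⬝ᵥ z)) :=
    mul_le_mul_of_nonneg_left e3 hT2
  have f4 : T ^ 3 * (u ⬝ᵥ (P *ᵥ v)) ≤ T ^ 2 * (c4 * (z ⬝ᵥ z)) :=
    le_trans (mul_le_mul_of_nonneg_left e4 hT3)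
      (mul_le_mul_of_nonneg_right h32 (mul_nonneg hc4.le hzz))
  have f5 : T ^ 3 * (v ⬝ᵥ (P *ᵥ u)) ≤ T ^ 2 * (c5 * (z ⬝ᵥ z)) :=
    le_trans (mul_le_mul_of_nonneg_left e5 hT3)
      (mul_le_mul_of_nonneg_right h32 (mul_nonneg hc5.le hzz))
  have f6 : T ^ 4 * (v ⬝ᵥ (P *ᵥ v)) ≤ T ^ 2 * (c6 * (z ⬝ᵥ z)) :=
    le_trans (mul_le_mul_of_nonneg_left e6 hT4)
      (mul_le_mul_of_nonneg_right h42 (mul_nonneg hc6.le hzz))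
  have fray : T * ((⨅ i, hQ.1.eigenvalues i) * (z ⬝ᵥ z)) ≤ T * (z ⬝ᵥ (Q *ᵥ z)) :=
    mul_le_mul_of_nonneg_left hray hT0
  rw [hmv, hexp, hlin]
  nlinarith [f1, f2, f3, f4, f5, f6, fray]
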